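/- Let $d \geq 1$, let $\Omega_+, \Omega_- \subseteq \mathbb{R}^d$ be nonempty connected open sets, let $\Gamma \subseteq \overline{\Omega_+} \cap \overline{\Omega_-}$ be a Borel set, and let $\mu_\Gamma$ be a nonzero finite Borel measure on $\Gamma$. Let $\varphi_\pm : \overline{\Omega_\pm} \to \mathbb{R}$ be continuous on $\overline{\Omega_\pm}$ and continuously differentiable on $\Omega_\pm$, and let $\varphi_\Gamma : \Gamma \to \mathbb{R}$ be measurable. Let $k_\pm : \Omega_\pm \to \mathbb{R}^{d\times d}$ satisfy the ellipticity condition $x \cdot k_\pm(y) x \geq \underline{k}|x|^2$ for some $\underline{k} > 0$, all $x \in \mathbb{R}^d$ and all $y \in \Omega_\pm$, and let $m_+, m_-, m_\Gamma : \Gamma \to \mathbb{R}$ be measurable with $m_- \geq 0$ $\mu_\Gamma$-a.e. and $m_+, m_\Gamma \geq \underline{m}$ $\mu_\Gamma$-a.e. for some $\underline{m} > 0$. Assume all the following integrands are integrable (with respect to Lebesgue measure on $\Omega_\pm$ and $\mu_\Gamma$ on $\Gamma$) and that $\int_{\Omega_+} \nabla\varphi_+ \cdot k_+ \nabla\varphi_+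 \,dx + \int_{\Omega_-} \nabla\varphi_- \cdot k_- \nabla\varphi_- \,dx + \int_\Gamma \big( m_+(\varphi_+ - \varphi_\Gamma)^2 + m_-(\varphi_- - \varphi_\Gamma)^2 + m_\Gamma(\varphi_+ - \varphi_-)^2 \big)\,d\mu_\Gamma = 0$. Then there is a constant $c \in \mathbb{R}$ such that $\varphi_+ \equiv c$ on $\overline{\Omega_+}$, $\varphi_- \equiv c$ on $\overline{\Omega_-}$, and $\varphi_\Gamma = c$ $\mu_\Gamma$-almost everywhere on $\Gamma$. -/

import Mathlib

open MeasureTheory Matrix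

section Aux

variable {E : Type*} [NormedAddCommGroup E] [NormedSpace ℝ E]

lemma aux_const_of_fderiv_zero {f : E → ℝ} {s : Set E} (hso : IsOpen s)
    (hsc : IsPreconnected s) (hdf : DifferentiableOn ℝ f s)
    (h0 : ∀ x ∈ s, fderiv ℝ f x = 0) {x y : E} (hx : x ∈ s) (hy : y ∈ s) :
    f x = f y := by
  have key : ∀ z : E, ∃ ε : ℝ, z ∈ s →
      0 < ε ∧ Metric.ball z ε ⊆ s ∧ ∀ w ∈ Metric.ball z ε, f w = f z := by
    intro z
    by_cases hz : z ∈ s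
    · obtain ⟨ε, hε, hball⟩ := Metric.isOpen_iff.1 hso z hz
      refine ⟨ε, fun _ => ⟨hε, hball, fun w hw => ?_⟩⟩
      refine (convex_ball z ε).is_const_of_fderivWithin_eq_zero (hdf.mono hball)
        (fun u hu => ?_) hw (Metric.mem_ball_self hε)
      rw [fderivWithin_of_isOpen Metric.isOpen_ball hu]
      exact h0 u (hball hu)
    · exact ⟨1, fun h => absurd h hz⟩
  choose r hr using key
  by_contra hne
  set U : Set E := ⋃ z ∈ {z ∈ s | f z = f x}, Metric.ball z (r z) with hU
  set V : Set E := ⋃ z ∈ {z ∈ s | f z ≠ f x}, Metric.ball z (r z) with hV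
  have hUo : IsOpen U := isOpen_biUnion fun _ _ => Metric.isOpen_ball
  have hVo : IsOpen V := isOpen_biUnion fun _ _ => Metric.isOpen_ball
  have hcover : s ⊆ U ∪ V := by
    intro z hz
    by_cases hfz : f z = f x
    · exact Or.inl (Set.mem_biUnion ⟨hz, hfz⟩ (Metric.mem_ball_self (hr z hz).1))
    · exact Or.inr (Set.mem_biUnion ⟨hz, hfz⟩ (Metric.mem_ball_self (hr z hz).1))
  have hxU : (s ∩ U).Nonempty :=
    ⟨x, hx, Set.mem_biUnion ⟨hx, rfl⟩ (Metric.mem_ball_self (hr x hx).1)⟩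
  have hyV : (s ∩ V).Nonempty :=
    ⟨y, hy, Set.mem_biUnion ⟨hy, fun h => hne h.symm⟩ (Metric.mem_ball_self (hr y hy).1)⟩
  obtain ⟨w, hws, hwU, hwV⟩ := hsc U V hUo hVo hcover hxU hyV
  obtain ⟨z₁, hz₁, hwz₁⟩ := Set.mem_iUnion₂.1 hwU
  obtain ⟨z₂, hz₂, hwz₂⟩ := Set.mem_iUnion₂.1 hwV
  have h1 : f w = f x := ((hr z₁ hz₁.1).2.2 w hwz₁).trans hz₁.2
  have h2 : f w ≠ f x := fun h => hz₂.2 (((hr z₂ hz₂.1).2.2 w hwz₂).symm.trans h)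
  exact h2 h1

lemma aux_eq_on_closure {f : E → ℝ} {s : Set E} {c : ℝ}
    (hf : ContinuousOn f (closure s)) (h : ∀ x ∈ s, f x = c) :
    ∀ x ∈ closure s, f x = c := by
  intro x hx
  haveI : (nhdsWithin x s).NeBot := mem_closure_iff_nhdsWithin_neBot.1 hx
  have h1 : Filter.Tendsto f (nhdsWithin x s) (nhds (f x)) :=
    ((hf x hx).mono_left (nhdsWithin_mono x subset_closure))
  have h2 : Filter.Tendsto f (nhdsWithin x s) (nhds c) := by
    refine Filter.Tendsto.congr' ?_ tendsto_const_nhds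
    filter_upwards [self_mem_nhdsWithin] with z hz using (h z hz).symm
  exact tendsto_nhds_unique h1 h2

end Aux

lemma bulk_const (d : ℕ) (Ω : Set (EuclideanSpace ℝ (Fin d)))
    (hopen : IsOpen Ω) (hconn : IsConnected Ω)
    (φ : EuclideanSpace ℝ (Fin d) → ℝ)
    (hcont : ContinuousOn φ (closure Ω)) (hdiff : ContDiffOn ℝ 1 φ Ω)
    (k : EuclideanSpace ℝ (Fin d) → Matrix (Fin d) (Fin d) ℝ)
    (k₀ : ℝ) (hk₀ : 0 < k₀)
    (hk : ∀ y ∈ Ω, ∀ x : Fin d → ℝ, k₀ * (∑ i, x i ^ 2) ≤ x ⬝ᵥ (k y *ᵥ x))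
    (hint : IntegrableOn (fun x =>
      (EuclideanSpace.equiv (Fin d) ℝ (gradient φ x)) ⬝ᵥ
        (k x *ᵥ (EuclideanSpace.equiv (Fin d) ℝ (gradient φ x)))) Ω volume)
    (hzero : (∫ x in Ω, (EuclideanSpace.equiv (Fin d) ℝ (gradient φ x)) ⬝ᵥ
        (k x *ᵥ (EuclideanSpace.equiv (Fin d) ℝ (gradient φ x)))) = 0) :
    ∀ x ∈ closure Ω, ∀ y ∈ closure Ω, φ x = φ y := by
  set F : EuclideanSpace ℝ (Fin d) → ℝ := fun x =>
    (EuclideanSpace.equiv (Fin d) ℝ (gradient φ x)) ⬝ᵥ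
      (k x *ᵥ (EuclideanSpace.equiv (Fin d) ℝ (gradient φ x))) with hF
  have hnn : ∀ x ∈ Ω, 0 ≤ F x := by
    intro x hx
    refine le_trans ?_ (hk x hx _)
    positivity
  have hnn_ae : 0 ≤ᵐ[volume.restrict Ω] F :=
    (ae_restrict_iff' hopen.measurableSet).2 (Filter.Eventually.of_forall hnn)
  have hae0 : F =ᵐ[volume.restrict Ω] 0 :=
    (integral_eq_zero_iff_of_nonneg_ae hnn_ae hint).1 hzero
  have hgrad_ae : ∀ᵐ x ∂(volume.restrict Ω), gradient φ x = 0 := by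
    filter_upwards [hae0, ae_restrict_mem hopen.measurableSet] with x h0 hx
    have hsum : k₀ * (∑ i, (EuclideanSpace.equiv (Fin d) ℝ (gradient φ x)) i ^ 2) ≤ 0 := by
      calc k₀ * (∑ i, (EuclideanSpace.equiv (Fin d) ℝ (gradient φ x)) i ^ 2) ≤ F x :=
            hk x hx _
        _ = 0 := h0
    have hsum0 : (∑ i, (EuclideanSpace.equiv (Fin d) ℝ (gradient φ x)) i ^ 2) = 0 := by
      have h1 : 0 ≤ ∑ i, (EuclideanSpace.equiv (Fin d) ℝ (gradient φ x)) i ^ 2 := by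
        positivity
      nlinarith
    have hco : ∀ i, (EuclideanSpace.equiv (Fin d) ℝ (gradient φ x)) i = 0 := by
      intro i
      have := (Finset.sum_eq_zero_iff_of_nonneg (fun i _ => sq_nonneg _)).1 hsum0 i
        (Finset.mem_univ i)
      exact pow_eq_zero_iff (by norm_num) |>.1 this
    have : EuclideanSpace.equiv (Fin d) ℝ (gradient φ x) = 0 := funext hco
    exact (EuclideanSpace.equiv (Fin d) ℝ).map_eq_zero_iff.1 this
  have hfc : ContinuousOn (fderiv ℝ φ) Ω := hdiff.continuousOn_fderiv_of_isOpen hopen le_rfl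
  have hgc : ContinuousOn (fun x => gradient φ x) Ω :=
    ((InnerProductSpace.toDual ℝ (EuclideanSpace ℝ (Fin d))).symm.continuous.comp_continuousOn hfc)
  have hgrad : ∀ x ∈ Ω, gradient φ x = 0 := by
    intro x hx
    by_contra hne
    have hca : ContinuousAt (fun x => gradient φ x) x := hgc.continuousAt (hopen.mem_nhds hx)
    have hev : ∀ᶠ z in nhds x, gradient φ z ≠ 0 ∧ z ∈ Ω :=
      (hca.eventually_ne hne).and (hopen.mem_nhds hx)
    obtain ⟨V, hVsub, hVo, hxV⟩ := mem_nhds_iff.1 hev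
    have hpos : 0 < volume V := hVo.measure_pos volume ⟨x, hxV⟩
    have hnull : (volume.restrict Ω) {z | gradient φ z ≠ 0} = 0 := by
      simpa [ae_iff] using hgrad_ae
    have hVr : (volume.restrict Ω) V = volume V := by
      rw [Measure.restrict_apply hVo.measurableSet]
      congr 1
      exact Set.inter_eq_left.2 fun z hz => (hVsub hz).2
    have : (volume.restrict Ω) V = 0 :=
      measure_mono_null (fun z hz => (hVsub hz).1) hnull
    rw [hVr] at this
    exact hpos.ne' this
  have hfz : ∀ x ∈ Ω, fderiv ℝ φ x = 0 := by
    intro x hx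
    have h1 : fderiv ℝ φ x = (InnerProductSpace.toDual ℝ (EuclideanSpace ℝ (Fin d)))
        (gradient φ x) :=
      ((InnerProductSpace.toDual ℝ _).apply_symm_apply _).symm
    rw [h1, hgrad x hx, map_zero]
  have hconst : ∀ x ∈ Ω, ∀ y ∈ Ω, φ x = φ y := fun x hx y hy =>
    aux_const_of_fderiv_zero hopen hconn.isPreconnected (hdiff.differentiableOn one_ne_zero)
      hfz hx hy
  obtain ⟨x₀, hx₀⟩ := hconn.nonempty
  have hcl : ∀ x ∈ closure Ω, φ x = φ x₀ :=
    aux_eq_on_closure hcont (fun x hx => hconst x hx x₀ hx₀)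
  intro x hx y hy
  rw [hcl x hx, hcl y hy]
theorem dissipation_form_kernel_characterization
    (d : ℕ) (hd : 1 ≤ d)
    (Ωp Ωm : Set (EuclideanSpace ℝ (Fin d)))
    (hΩp_open : IsOpen Ωp) (hΩp_conn : IsConnected Ωp)
    (hΩm_open : IsOpen Ωm) (hΩm_conn : IsConnected Ωm)
    (Γ : Set (EuclideanSpace ℝ (Fin d)))
    (hΓ : Γ ⊆ closure Ωp ∩ closure Ωm) (hΓ_meas : MeasurableSet Γ)
    (μg : Measure (EuclideanSpace ℝ (Fin d))) [IsFiniteMeasure μg]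
    (hμg_ne : μg ≠ 0) (hμg_supp : μg Γᶜ = 0)
    (φp φm φg : EuclideanSpace ℝ (Fin d) → ℝ)
    (hφp_cont : ContinuousOn φp (closure Ωp)) (hφp_diff : ContDiffOn ℝ 1 φp Ωp)
    (hφm_cont : ContinuousOn φm (closure Ωm)) (hφm_diff : ContDiffOn ℝ 1 φm Ωm)
    (hφg_meas : Measurable φg)
    (kp km : EuclideanSpace ℝ (Fin d) → Matrix (Fin d) (Fin d) ℝ)
    (k₀ : ℝ) (hk₀ : 0 < k₀)
    (hkp : ∀ y ∈ Ωp, ∀ x : Fin d → ℝ, k₀ * (∑ i, x i ^ 2) ≤ x ⬝ᵥ (kp y *ᵥ x))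
    (hkm : ∀ y ∈ Ωm, ∀ x : Fin d → ℝ, k₀ * (∑ i, x i ^ 2) ≤ x ⬝ᵥ (km y *ᵥ x))
    (mp mm mg : EuclideanSpace ℝ (Fin d) → ℝ)
    (m₀ : ℝ) (hm₀ : 0 < m₀)
    (hmm : ∀ᵐ y ∂μg, 0 ≤ mm y)
    (hmp : ∀ᵐ y ∂μg, m₀ ≤ mp y)
    (hmg : ∀ᵐ y ∂μg, m₀ ≤ mg y)
    (hint_p : IntegrableOn (fun x =>
      (EuclideanSpace.equiv (Fin d) ℝ (gradient φp x)) ⬝ᵥ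
        (kp x *ᵥ (EuclideanSpace.equiv (Fin d) ℝ (gradient φp x)))) Ωp volume)
    (hint_m : IntegrableOn (fun x =>
      (EuclideanSpace.equiv (Fin d) ℝ (gradient φm x)) ⬝ᵥ
        (km x *ᵥ (EuclideanSpace.equiv (Fin d) ℝ (gradient φm x)))) Ωm volume)
    (hint_g : Integrable (fun y =>
      mp y * (φp y - φg y) ^ 2 + mm y * (φm y - φg y) ^ 2 + mg y * (φp y - φm y) ^ 2) μg)
    (hzero :
      (∫ x in Ωp, (EuclideanSpace.equiv (Fin d) ℝ (gradient φp x)) ⬝ᵥ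
        (kp x *ᵥ (EuclideanSpace.equiv (Fin d) ℝ (gradient φp x))))
      + (∫ x in Ωm, (EuclideanSpace.equiv (Fin d) ℝ (gradient φm x)) ⬝ᵥ
        (km x *ᵥ (EuclideanSpace.equiv (Fin d) ℝ (gradient φm x))))
      + (∫ y, (mp y * (φp y - φg y) ^ 2 + mm y * (φm y - φg y) ^ 2
          + mg y * (φp y - φm y) ^ 2) ∂μg) = 0) :
    ∃ c : ℝ, (∀ x ∈ closure Ωp, φp x = c) ∧ (∀ x ∈ closure Ωm, φm x = c) ∧
      (∀ᵐ y ∂μg, φg y = c) := by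
  -- nonnegativity of the three integrals
  have hIp : 0 ≤ ∫ x in Ωp, (EuclideanSpace.equiv (Fin d) ℝ (gradient φp x)) ⬝ᵥ
      (kp x *ᵥ (EuclideanSpace.equiv (Fin d) ℝ (gradient φp x))) := by
    refine setIntegral_nonneg hΩp_open.measurableSet fun x hx => ?_
    refine le_trans ?_ (hkp x hx _); positivity
  have hIm : 0 ≤ ∫ x in Ωm, (EuclideanSpace.equiv (Fin d) ℝ (gradient φm x)) ⬝ᵥ
      (km x *ᵥ (EuclideanSpace.equiv (Fin d) ℝ (gradient φm x))) := by
    refine setIntegral_nonneg hΩm_open.measurableSet fun x hx => ?_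
    refine le_trans ?_ (hkm x hx _); positivity
  have hGnn : 0 ≤ᵐ[μg] fun y =>
      mp y * (φp y - φg y) ^ 2 + mm y * (φm y - φg y) ^ 2 + mg y * (φp y - φm y) ^ 2 := by
    filter_upwards [hmp, hmm, hmg] with y h1 h2 h3
    have := sq_nonneg (φp y - φg y); have := sq_nonneg (φm y - φg y)
    have := sq_nonneg (φp y - φm y)
    simp only [Pi.zero_apply]
    nlinarith
  have hIg : 0 ≤ ∫ y, (mp y * (φp y - φg y) ^ 2 + mm y * (φm y - φg y) ^ 2
      + mg y * (φp y - φm y) ^ 2) ∂μg := integral_nonneg_of_ae hGnn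
  have hzp : (∫ x in Ωp, (EuclideanSpace.equiv (Fin d) ℝ (gradient φp x)) ⬝ᵥ
      (kp x *ᵥ (EuclideanSpace.equiv (Fin d) ℝ (gradient φp x)))) = 0 := by linarith
  have hzm : (∫ x in Ωm, (EuclideanSpace.equiv (Fin d) ℝ (gradient φm x)) ⬝ᵥ
      (km x *ᵥ (EuclideanSpace.equiv (Fin d) ℝ (gradient φm x)))) = 0 := by linarith
  have hzg : (∫ y, (mp y * (φp y - φg y) ^ 2 + mm y * (φm y - φg y) ^ 2
      + mg y * (φp y - φm y) ^ 2) ∂μg) = 0 := by linarith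
  -- bulk constancy
  have hp := bulk_const d Ωp hΩp_open hΩp_conn φp hφp_cont hφp_diff kp k₀ hk₀ hkp hint_p hzp
  have hm := bulk_const d Ωm hΩm_open hΩm_conn φm hφm_cont hφm_diff km k₀ hk₀ hkm hint_m hzm
  -- interface
  have hG0 : (fun y => mp y * (φp y - φg y) ^ 2 + mm y * (φm y - φg y) ^ 2
      + mg y * (φp y - φm y) ^ 2) =ᵐ[μg] 0 :=
    (integral_eq_zero_iff_of_nonneg_ae hGnn hint_g).1 hzg
  have hae : ∀ᵐ y ∂μg, φp y = φg y ∧ φp y = φm y := by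
    filter_upwards [hG0, hmp, hmm, hmg] with y h0 h1 h2 h3
    have h0' : mp y * (φp y - φg y) ^ 2 + mm y * (φm y - φg y) ^ 2
        + mg y * (φp y - φm y) ^ 2 = 0 := by simpa using h0
    have ha : (φp y - φg y) ^ 2 = 0 := by
      nlinarith [sq_nonneg (φp y - φg y), sq_nonneg (φm y - φg y), sq_nonneg (φp y - φm y),
        mul_nonneg (by linarith : (0:ℝ) ≤ mp y - m₀) (sq_nonneg (φp y - φg y)),
        mul_nonneg h2 (sq_nonneg (φm y - φg y)),
        mul_nonneg (by linarith : (0:ℝ) ≤ mg y - m₀) (sq_nonneg (φp y - φm y))]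
    have hc : (φp y - φm y) ^ 2 = 0 := by
      nlinarith [sq_nonneg (φp y - φg y), sq_nonneg (φm y - φg y), sq_nonneg (φp y - φm y),
        mul_nonneg (by linarith : (0:ℝ) ≤ mp y - m₀) (sq_nonneg (φp y - φg y)),
        mul_nonneg h2 (sq_nonneg (φm y - φg y)),
        mul_nonneg (by linarith : (0:ℝ) ≤ mg y - m₀) (sq_nonneg (φp y - φm y))]
    constructor
    · have := pow_eq_zero_iff (n := 2) (by norm_num) |>.1 ha
      linarith [sub_eq_zero.1 this]
    · have := pow_eq_zero_iff (n := 2) (by norm_num) |>.1 hc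
      linarith [sub_eq_zero.1 this]
  have hmemΓ : ∀ᵐ y ∂μg, y ∈ Γ := by
    rw [MeasureTheory.ae_iff]
    simpa [Set.compl_def] using hμg_supp
  haveI : (MeasureTheory.ae μg).NeBot := ae_neBot.2 hμg_ne
  obtain ⟨y₀, hy₀Γ, hy₀pg, hy₀pm⟩ := (hmemΓ.and hae).exists
  have hy₀p : y₀ ∈ closure Ωp := (hΓ hy₀Γ).1
  have hy₀m : y₀ ∈ closure Ωm := (hΓ hy₀Γ).2
  refine ⟨φp y₀, fun x hx => hp x hx y₀ hy₀p, fun x hx => ?_, ?_⟩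
  · rw [hm x hx y₀ hy₀m]; exact hy₀pm.symm
  · filter_upwards [hae, hmemΓ] with y hy hyΓ
    rw [← hy.1, hp y (hΓ hyΓ).1 y₀ hy₀p]
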